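/- Suppose n ≥ 1 and d ≥ 0 are integers, P is a multilinear polynomial in n variables of total degree at most d over a field 𝔽, and A ⊆ 𝔽ⁿ is a subset with |A| > 2·∑_{i=0}^{⌊d/2⌋} C(n,i). If P(a − b) = 0 for all distinct a, b ∈ A, then P(0) = 0. -/

import Mathlib

open Finset MvPolynomial

noncomputable def clpF {n : ℕ} {𝔽 : Type*} [Field 𝔽] (P : MvPolynomial (Fin n) 𝔽)
    (T : Finset (Fin n)) (b : Fin n → 𝔽) : 𝔽 :=
  ∑ m ∈ P.support.filter (fun m => T ⊆ m.support), coeff m P * ∏ i ∈ m.support \ T, (-b i)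

noncomputable def clpG {n : ℕ} {𝔽 : Type*} [Field 𝔽] (m0 : ℕ) (P : MvPolynomial (Fin n) 𝔽)
    (T : Finset (Fin n)) (a : Fin n → 𝔽) : 𝔽 :=
  ∑ m ∈ P.support.filter (fun m => T ⊆ m.support ∧ m0 < (m.support \ T).card),
    coeff m P * ∏ i ∈ m.support \ T, a i

lemma clp_key {n : ℕ} {𝔽 : Type*} [Field 𝔽] (m0 : ℕ) (P : MvPolynomial (Fin n) 𝔽)
    (hml : ∀ m ∈ P.support, ∀ i, m i ≤ 1)
    (hcard : ∀ m ∈ P.support, m.support.card ≤ 2 * m0 + 1)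
    (a b : Fin n → 𝔽) :
    eval (a - b) P =
      ∑ T ∈ Finset.univ.filter (fun T : Finset (Fin n) => T.card ≤ m0),
        (∏ i ∈ T, a i) * clpF P T b +
      ∑ T ∈ Finset.univ.filter (fun T : Finset (Fin n) => T.card ≤ m0),
        clpG m0 P T a * ∏ i ∈ T, (-b i) := by
  classical
  have h1 : eval (a - b) P =
      ∑ m ∈ P.support, ∑ S ∈ m.support.powerset,
        coeff m P * ((∏ i ∈ S, a i) * ∏ i ∈ m.support \ S, (-b i)) := by
    rw [eval_eq]
    refine sum_congr rfl fun m hm => ?_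
    rw [← mul_sum, ← prod_add]
    congr 1
    refine prod_congr rfl fun i hi => ?_
    have h1 : m i = 1 :=
      le_antisymm (hml m hm i) (Nat.one_le_iff_ne_zero.mpr (Finsupp.mem_support_iff.mp hi))
    rw [h1, pow_one]
    simp [sub_eq_add_neg]
  rw [h1]
  have hsplit : ∀ m ∈ P.support,
      (∑ S ∈ m.support.powerset,
        coeff m P * ((∏ i ∈ S, a i) * ∏ i ∈ m.support \ S, (-b i))) =
      (∑ S ∈ m.support.powerset.filter (fun S => S.card ≤ m0),
        coeff m P * ((∏ i ∈ S, a i) * ∏ i ∈ m.support \ S, (-b i))) +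
      (∑ S ∈ m.support.powerset.filter (fun S => ¬ S.card ≤ m0),
        coeff m P * ((∏ i ∈ S, a i) * ∏ i ∈ m.support \ S, (-b i))) := by
    intro m _
    rw [sum_filter_add_sum_filter_not]
  rw [sum_congr rfl hsplit, sum_add_distrib]
  congr 1
  · -- part 1
    rw [Finset.sum_comm' (t' := Finset.univ.filter (fun T : Finset (Fin n) => T.card ≤ m0))
        (s' := fun T => P.support.filter (fun m => T ⊆ m.support))]
    · refine sum_congr rfl fun T _ => ?_
      rw [clpF, mul_sum]
      exact sum_congr rfl fun m _ => by ring
    · intro m S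
      simp only [mem_filter, mem_powerset, mem_univ, true_and]
      tauto
  · -- part 2
    have h2 : ∀ m ∈ P.support,
        (∑ S ∈ m.support.powerset.filter (fun S => ¬ S.card ≤ m0),
          coeff m P * ((∏ i ∈ S, a i) * ∏ i ∈ m.support \ S, (-b i))) =
        (∑ U ∈ m.support.powerset.filter (fun U => m0 < (m.support \ U).card),
          coeff m P * ((∏ i ∈ m.support \ U, a i) * ∏ i ∈ U, (-b i))) := by
      intro m _
      refine Finset.sum_nbij' (fun S => m.support \ S) (fun U => m.support \ U) ?_ ?_ ?_ ?_ ?_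
      · intro S hS
        simp only [mem_filter, mem_powerset, not_le] at hS ⊢
        refine ⟨sdiff_subset, ?_⟩
        rw [Finset.sdiff_sdiff_eq_self hS.1]; exact hS.2
      · intro U hU
        simp only [mem_filter, mem_powerset, not_le] at hU ⊢
        exact ⟨sdiff_subset, hU.2⟩
      · intro S hS
        simp only [mem_filter, mem_powerset] at hS
        exact Finset.sdiff_sdiff_eq_self hS.1
      · intro U hU
        simp only [mem_filter, mem_powerset] at hU
        exact Finset.sdiff_sdiff_eq_self hU.1
      · intro S hS
        simp only [mem_filter, mem_powerset] at hS
        rw [Finset.sdiff_sdiff_eq_self hS.1]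
    rw [sum_congr rfl h2]
    rw [Finset.sum_comm' (t' := Finset.univ.filter (fun T : Finset (Fin n) => T.card ≤ m0))
        (s' := fun U => P.support.filter (fun m => U ⊆ m.support ∧ m0 < (m.support \ U).card))]
    · refine sum_congr rfl fun T _ => ?_
      rw [clpG, sum_mul]
      exact sum_congr rfl fun m _ => by ring
    · intro m U
      simp only [mem_filter, mem_powerset, mem_univ, true_and]
      constructor
      · rintro ⟨hm, hU, hc⟩
        refine ⟨⟨hm, hU, hc⟩, ?_⟩
        have e1 := Finset.card_sdiff_add_card_eq_card hU
        have e2 := hcard m hm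
        omega
      · rintro ⟨⟨hm, hU, hc⟩, _⟩
        exact ⟨hm, hU, hc⟩

theorem croot_lev_pach {n d : ℕ} (hn : 1 ≤ n) (𝔽 : Type*) [Field 𝔽]
    (P : MvPolynomial (Fin n) 𝔽)
    (hml : ∀ m ∈ P.support, ∀ i, m i ≤ 1)
    (hdeg : P.totalDegree ≤ d)
    (A : Finset (Fin n → 𝔽))
    (hA : 2 * ∑ i ∈ Finset.range (d / 2 + 1), n.choose i < A.card)
    (hzero : ∀ a ∈ A, ∀ b ∈ A, a ≠ b → eval (a - b) P = 0) :
    eval 0 P = 0 := by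
  classical
  by_contra hc
  set m0 := d / 2 with hm0
  set 𝒯 : Finset (Finset (Fin n)) := Finset.univ.filter (fun T => T.card ≤ m0) with hTdef
  have hTcard : 𝒯.card = ∑ i ∈ Finset.range (m0 + 1), n.choose i := by
    have heq : 𝒯 = (Finset.range (m0 + 1)).biUnion
        (fun k => Finset.powersetCard k (Finset.univ : Finset (Fin n))) := by
      ext T
      simp only [hTdef, mem_filter, mem_univ, true_and, mem_biUnion, mem_range,
        Finset.mem_powersetCard, Finset.subset_univ, true_and, Nat.lt_succ_iff]
      constructor
      · intro h; exact ⟨T.card, h, rfl⟩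
      · rintro ⟨k, hk, rfl⟩; exact hk
    rw [heq, Finset.card_biUnion]
    · refine Finset.sum_congr rfl fun k _ => ?_
      rw [Finset.card_powersetCard, Finset.card_univ, Fintype.card_fin]
    · intro x _ y _ hxy
      exact Finset.pairwise_disjoint_powersetCard Finset.univ hxy
  have hcard : ∀ m ∈ P.support, m.support.card ≤ 2 * m0 + 1 := by
    intro m hm
    have h1 : m.support.card ≤ m.sum fun _ e => e := by
      rw [Finsupp.sum]
      calc m.support.card = ∑ _i ∈ m.support, 1 := by simp
        _ ≤ ∑ i ∈ m.support, m i := Finset.sum_le_sum fun i hi =>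
            Nat.one_le_iff_ne_zero.mpr (Finsupp.mem_support_iff.mp hi)
    have h2 := MvPolynomial.le_totalDegree hm
    omega
  set Ffun : Finset (Fin n) → (↥A → 𝔽) := fun T b => clpF P T ↑b with hFfun
  set Mfun : Finset (Fin n) → (↥A → 𝔽) :=
    fun T b => ∏ i ∈ T, (-(b : Fin n → 𝔽) i) with hMfun
  set S : Finset (↥A → 𝔽) := 𝒯.image Ffun ∪ 𝒯.image Mfun with hSdef
  set W : Submodule 𝔽 (↥A → 𝔽) := Submodule.span 𝔽 (S : Set (↥A → 𝔽)) with hWdef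
  have hrow : ∀ a : ↥A, (fun b : ↥A => eval ((a : Fin n → 𝔽) - (b : Fin n → 𝔽)) P) ∈ W := by
    intro a
    have heq : (fun b : ↥A => eval ((a : Fin n → 𝔽) - (b : Fin n → 𝔽)) P) =
        (∑ T ∈ 𝒯, (∏ i ∈ T, (a : Fin n → 𝔽) i) • Ffun T) +
        (∑ T ∈ 𝒯, (clpG m0 P T ↑a) • Mfun T) := by
      funext b
      simp only [Pi.add_apply, Finset.sum_apply, Pi.smul_apply, smul_eq_mul, hFfun, hMfun]
      exact clp_key m0 P hml hcard ↑a ↑b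
    rw [heq]
    refine Submodule.add_mem _
      (Submodule.sum_mem _ fun T hT => Submodule.smul_mem _ _ ?_)
      (Submodule.sum_mem _ fun T hT => Submodule.smul_mem _ _ ?_)
    · exact Submodule.subset_span (by
        simp only [hSdef, Finset.coe_union, Set.mem_union, Finset.coe_image, Set.mem_image]
        exact Or.inl ⟨T, by simpa using hT, rfl⟩)
    · exact Submodule.subset_span (by
        simp only [hSdef, Finset.coe_union, Set.mem_union, Finset.coe_image, Set.mem_image]
        exact Or.inr ⟨T, by simpa using hT, rfl⟩)
  have hdelta : ∀ a : ↥A, (Pi.single a 1 : ↥A → 𝔽) ∈ W := by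
    intro a
    have heq : (fun b : ↥A => eval ((a : Fin n → 𝔽) - (b : Fin n → 𝔽)) P) =
        (eval 0 P) • (Pi.single a 1 : ↥A → 𝔽) := by
      funext b
      by_cases h : b = a
      · subst h; simp
      · have hne : (a : Fin n → 𝔽) ≠ ↑b := fun he => h (Subtype.ext he.symm)
        rw [Pi.smul_apply, Pi.single_eq_of_ne h, smul_zero]
        exact hzero ↑a a.2 ↑b b.2 hne
    have hm := hrow a
    rw [heq] at hm
    have h2 : (Pi.single a 1 : ↥A → 𝔽) = (eval 0 P)⁻¹ • ((eval 0 P) • (Pi.single a 1 : ↥A → 𝔽)) := by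
      rw [smul_smul, inv_mul_cancel₀ hc, one_smul]
    rw [h2]
    exact Submodule.smul_mem _ _ hm
  have hli : LinearIndependent 𝔽 (fun a : ↥A => (Pi.single a 1 : ↥A → 𝔽)) := by
    have h := (Pi.basisFun 𝔽 ↥A).linearIndependent
    have he : ⇑(Pi.basisFun 𝔽 ↥A) = fun a : ↥A => (Pi.single a 1 : ↥A → 𝔽) := by
      funext a; exact Pi.basisFun_apply 𝔽 ↥A a
    rwa [he] at h
  have hcardle : Fintype.card ↥A ≤ Module.finrank 𝔽 W := by
    have h1 : Submodule.span 𝔽 (Set.range fun a : ↥A => (Pi.single a 1 : ↥A → 𝔽)) ≤ W :=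
      Submodule.span_le.mpr (by rintro _ ⟨a, rfl⟩; exact hdelta a)
    have h2 := finrank_span_eq_card hli
    rw [← h2]
    exact Submodule.finrank_mono h1
  have hWle : Module.finrank 𝔽 W ≤ S.card := finrank_span_finset_le_card S
  have hScard : S.card ≤ 2 * 𝒯.card := by
    refine le_trans (Finset.card_union_le _ _) ?_
    rw [two_mul]
    exact add_le_add (Finset.card_image_le) (Finset.card_image_le)
  have hAc : Fintype.card ↥A = A.card := Fintype.card_coe A
  omega
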